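/- Let n ≥ 1 and R > 0. Then ∫_{B(0,R) ⊂ ℝ^{2n}} |∇u_R(z) + z⊥/2| dz = (π^{n+1/2}·Γ(n + 1/2) / (2·Γ(n)·Γ(n+1))) · R^{2n+1}. Equivalently, with Q = 2n+2, this equals (π^{(Q−1)/2}·Γ((Q−1)/2) / (2·Γ((Q−2)/2)·Γ(Q/2))) · R^{Q−1}. (Here |∇u_R(z) + z⊥/2| = √(|∇u_R(z)|² + |z|²/4 + ⟨∇u_R(z), z⊥⟩) since ⟨z, z⊥⟩ = 0 and |z⊥| = |z|.) -/

import Mathlib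

open Metric MeasureTheory Real

/-- The map `z = (x, y) ↦ z⊥ = (y, -x)` on `ℝ^{2n}`. -/
noncomputable def zperp (n : ℕ) (z : EuclideanSpace ℝ (Fin (2 * n))) :
    EuclideanSpace ℝ (Fin (2 * n)) := WithLp.toLp 2 fun (i : Fin (2 * n)) =>
  if h : (i : ℕ) < n then z ⟨(i : ℕ) + n, by have := i.isLt; omega⟩
  else -z ⟨(i : ℕ) - n, by have := i.isLt; omega⟩

/-- The candidate isoperimetric profile `u_R` on `ℝ^{2n}`. -/
noncomputable def uR (n : ℕ) (R : ℝ) (z : EuclideanSpace ℝ (Fin (2 * n))) : ℝ :=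
  if ‖z‖ ≤ R then
    π * R ^ 2 / 8 + ‖z‖ / 4 * Real.sqrt (R ^ 2 - ‖z‖ ^ 2) - R ^ 2 / 4 * Real.arcsin (‖z‖ / R)
  else 0

/-- The class `D(R)`: continuous nonnegative functions on the closed ball, vanishing on the
sphere, `C²` inside, `W^{1,1}` inside, whose support is not contained in any smaller ball. -/
def memD (n : ℕ) (R : ℝ) (u : EuclideanSpace ℝ (Fin (2 * n)) → ℝ) : Prop :=
  ContinuousOn u (closedBall 0 R) ∧
  (∀ z ∈ closedBall (0 : EuclideanSpace ℝ (Fin (2 * n))) R, 0 ≤ u z) ∧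
  (∀ z ∈ sphere (0 : EuclideanSpace ℝ (Fin (2 * n))) R, u z = 0) ∧
  ContDiffOn ℝ 2 u (ball 0 R) ∧
  IntegrableOn u (ball 0 R) ∧
  IntegrableOn (fun z => gradient u z) (ball 0 R) ∧
  (∀ r : ℝ, r < R → ¬ (Function.support u ∩ closedBall 0 R ⊆ ball 0 r))

/-- Half the volume: `∫_{B(0,R)} u`. -/
noncomputable def hVol (n : ℕ) (R : ℝ) (u : EuclideanSpace ℝ (Fin (2 * n)) → ℝ) : ℝ :=
  ∫ z in ball (0 : EuclideanSpace ℝ (Fin (2 * n))) R, u z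

/-- The H-perimeter functional: `∫_{B(0,R)} |∇u(z) + z⊥/2| dz`. -/
noncomputable def hPer (n : ℕ) (R : ℝ) (u : EuclideanSpace ℝ (Fin (2 * n)) → ℝ) : ℝ :=
  ∫ z in ball (0 : EuclideanSpace ℝ (Fin (2 * n))) R,
    ‖gradient u z + (1 / 2 : ℝ) • zperp n z‖


def sigmaPerp (n : ℕ) : Equiv.Perm (Fin (2 * n)) where
  toFun i := if h : (i : ℕ) < n then ⟨(i : ℕ) + n, by have := i.isLt; omega⟩
    else ⟨(i : ℕ) - n, by have := i.isLt; omega⟩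
  invFun i := if h : (i : ℕ) < n then ⟨(i : ℕ) + n, by have := i.isLt; omega⟩
    else ⟨(i : ℕ) - n, by have := i.isLt; omega⟩
  left_inv i := by
    by_cases h : (i : ℕ) < n
    · simp only [dif_pos h]
      rw [dif_neg (by omega)]
      ext; simp
    · have := i.isLt
      simp only [dif_neg h]
      rw [dif_pos (by omega)]
      ext; simp; omega
  right_inv i := by
    by_cases h : (i : ℕ) < n
    · simp only [dif_pos h]
      rw [dif_neg (by omega)]
      ext; simp
    · have := i.isLt
      simp only [dif_neg h]
      rw [dif_pos (by omega)]
      ext; simp; omega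

lemma sigmaPerp_apply (n : ℕ) (i : Fin (2 * n)) :
    sigmaPerp n i = if h : (i : ℕ) < n then (⟨(i : ℕ) + n, by have := i.isLt; omega⟩ : Fin (2*n))
      else ⟨(i : ℕ) - n, by have := i.isLt; omega⟩ := rfl

lemma sigmaPerp_sigmaPerp (n : ℕ) (i : Fin (2 * n)) :
    sigmaPerp n (sigmaPerp n i) = i := (sigmaPerp n).left_inv i

lemma coe_sigmaPerp_lt (n : ℕ) (i : Fin (2 * n)) :
    ((sigmaPerp n i : Fin (2*n)) : ℕ) < n ↔ ¬ ((i : ℕ) < n) := by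
  have := i.isLt
  rw [sigmaPerp_apply]
  by_cases h : (i : ℕ) < n
  · rw [dif_pos h]; simpa using by omega
  · rw [dif_neg h]; simpa [h] using by omega

lemma zperp_apply (n : ℕ) (z : EuclideanSpace ℝ (Fin (2 * n))) (i : Fin (2 * n)) :
    zperp n z i = if (i : ℕ) < n then z (sigmaPerp n i) else -z (sigmaPerp n i) := by
  rw [sigmaPerp_apply]
  by_cases h : (i : ℕ) < n
  · rw [if_pos h, dif_pos h]
    simp [zperp, dif_pos h]
  · rw [if_neg h, dif_neg h]
    simp [zperp, dif_neg h]

lemma norm_zperp (n : ℕ) (z : EuclideanSpace ℝ (Fin (2 * n))) : ‖zperp n z‖ = ‖z‖ := by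
  rw [EuclideanSpace.norm_eq, EuclideanSpace.norm_eq]
  congr 1
  rw [← Equiv.sum_comp (sigmaPerp n) (fun i => ‖z i‖ ^ 2)]
  refine Finset.sum_congr rfl fun i _ => ?_
  rw [zperp_apply]
  by_cases h : (i : ℕ) < n <;> simp [h]

lemma inner_zperp (n : ℕ) (z : EuclideanSpace ℝ (Fin (2 * n))) :
    (inner ℝ z (zperp n z) : ℝ) = 0 := by
  have key : ∀ i : Fin (2 * n), z (sigmaPerp n i) * zperp n z (sigmaPerp n i)
      = -(z i * zperp n z i) := by
    intro i
    rw [zperp_apply n z (sigmaPerp n i), zperp_apply n z i, sigmaPerp_sigmaPerp]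
    by_cases h : (i : ℕ) < n
    · rw [if_pos h, if_neg (by rw [coe_sigmaPerp_lt]; exact not_not_intro h)]
      ring
    · rw [if_neg h, if_pos ((coe_sigmaPerp_lt n i).mpr h)]
      ring
  have := Equiv.sum_comp (sigmaPerp n) (fun i => z i * zperp n z i)
  have h2 : ∑ i : Fin (2*n), z i * zperp n z i = 0 := by
    have hneg : ∑ i : Fin (2*n), z i * zperp n z i
        = -∑ i : Fin (2*n), z i * zperp n z i := by
      conv_lhs => rw [← this]
      rw [← Finset.sum_neg_distrib]
      exact Finset.sum_congr rfl fun i _ => key i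
    linarith
  rw [PiLp.inner_apply]
  simpa [RCLike.inner_apply, mul_comm] using h2

lemma hasDerivAt_phi (R : ℝ) (hR : 0 < R) {s : ℝ} (hs0 : 0 < s) (hsR : s < R ^ 2) :
    HasDerivAt (fun s : ℝ => π * R ^ 2 / 8 + Real.sqrt s / 4 * Real.sqrt (R ^ 2 - s)
      - R ^ 2 / 4 * Real.arcsin (Real.sqrt s / R))
      (-(Real.sqrt s / (4 * Real.sqrt (R ^ 2 - s)))) s := by
  have ha : 0 < Real.sqrt s := Real.sqrt_pos.mpr hs0
  have hbpos : 0 < R ^ 2 - s := by linarith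
  have hb : 0 < Real.sqrt (R ^ 2 - s) := Real.sqrt_pos.mpr hbpos
  have ha2 : Real.sqrt s ^ 2 = s := Real.sq_sqrt hs0.le
  have hb2 : Real.sqrt (R ^ 2 - s) ^ 2 = R ^ 2 - s := Real.sq_sqrt hbpos.le
  have haR : Real.sqrt s < R := by
    nlinarith [Real.sq_sqrt hs0.le]
  have h1 : HasDerivAt Real.sqrt (1 / (2 * Real.sqrt s)) s := Real.hasDerivAt_sqrt hs0.ne'
  have h2 : HasDerivAt (fun s : ℝ => R ^ 2 - s) (-1) s := by
    simpa using (hasDerivAt_id s).const_sub (R ^ 2)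
  have h3 : HasDerivAt (fun s : ℝ => Real.sqrt (R ^ 2 - s))
      (-1 / (2 * Real.sqrt (R ^ 2 - s))) s := h2.sqrt hbpos.ne'
  have h4 : HasDerivAt (fun s : ℝ => Real.sqrt s / R) (1 / (2 * Real.sqrt s) / R) s :=
    h1.div_const R
  have hne1 : Real.sqrt s / R ≠ -1 := by
    have : 0 < Real.sqrt s / R := div_pos ha hR
    intro h; rw [h] at this; linarith
  have hlt1 : Real.sqrt s / R < 1 := (div_lt_one hR).mpr haR
  have harc : HasDerivAt (fun s : ℝ => Real.arcsin (Real.sqrt s / R))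
      (1 / Real.sqrt (1 - (Real.sqrt s / R) ^ 2) * (1 / (2 * Real.sqrt s) / R)) s :=
    HasDerivAt.comp s (h := fun s : ℝ => Real.sqrt s / R) (Real.hasDerivAt_arcsin hne1 hlt1.ne) h4
  have hprod : HasDerivAt (fun s : ℝ => Real.sqrt s / 4 * Real.sqrt (R ^ 2 - s))
      ((1 / (2 * Real.sqrt s) / 4) * Real.sqrt (R ^ 2 - s)
        + (Real.sqrt s / 4) * (-1 / (2 * Real.sqrt (R ^ 2 - s)))) s :=
    (h1.div_const 4).mul h3
  have hfull := ((hasDerivAt_const s (π * R ^ 2 / 8)).add hprod).sub (harc.const_mul (R ^ 2 / 4))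
  refine hfull.congr_deriv ?_
  symm
  have hsq : Real.sqrt (1 - (Real.sqrt s / R) ^ 2) = Real.sqrt (R ^ 2 - s) / R := by
    rw [show (1 : ℝ) - (Real.sqrt s / R) ^ 2 = (R ^ 2 - s) / R ^ 2 by
      field_simp; rw [ha2]]
    rw [Real.sqrt_div hbpos.le, Real.sqrt_sq hR.le]
  rw [hsq]
  have e1 : 1 / (Real.sqrt (R ^ 2 - s) / R) * (1 / (2 * Real.sqrt s) / R)
      = 1 / (2 * Real.sqrt s * Real.sqrt (R ^ 2 - s)) := by
    field_simp
  rw [e1]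
  have hR2 : R ^ 2 = Real.sqrt s ^ 2 + Real.sqrt (R ^ 2 - s) ^ 2 := by
    rw [ha2, hb2]; ring
  generalize hA : Real.sqrt s = a at *
  generalize hB : Real.sqrt (R ^ 2 - s) = b at *
  rw [hR2]
  field_simp
  ring


set_option maxHeartbeats 1000000 in
lemma hasGradientAt_uR (n : ℕ) (R : ℝ) (hR : 0 < R) {z : EuclideanSpace ℝ (Fin (2 * n))}
    (hz0 : z ≠ 0) (hzR : ‖z‖ < R) :
    HasGradientAt (uR n R)
      ((-(‖z‖ / (2 * Real.sqrt (R ^ 2 - ‖z‖ ^ 2)))) • z) z := by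
  have hz : 0 < ‖z‖ := norm_pos_iff.mpr hz0
  have hs0 : 0 < ‖z‖ ^ 2 := by positivity
  have hsR : ‖z‖ ^ 2 < R ^ 2 := by nlinarith
  have hd := hasDerivAt_phi R hR hs0 hsR
  have hF : HasFDerivAt (fun z : EuclideanSpace ℝ (Fin (2 * n)) => ‖z‖ ^ 2)
      ((2 : ℕ) • (innerSL ℝ) z) z := (hasStrictFDerivAt_norm_sq z).hasFDerivAt
  have hcomp := hd.comp_hasFDerivAt z hF
  have hlin : (InnerProductSpace.toDual ℝ (EuclideanSpace ℝ (Fin (2 * n))))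
        ((-(‖z‖ / (2 * Real.sqrt (R ^ 2 - ‖z‖ ^ 2)))) • z)
      = (-(Real.sqrt (‖z‖ ^ 2) / (4 * Real.sqrt (R ^ 2 - ‖z‖ ^ 2)))) •
        ((2 : ℕ) • (innerSL ℝ) z) := by
    ext y
    simp only [InnerProductSpace.toDual_apply_apply, ContinuousLinearMap.smul_apply,
      innerSL_apply_apply, smul_eq_mul, real_inner_smul_left]
    rw [Real.sqrt_sq hz.le]
    push_cast
    ring
  have hg : HasGradientAt (fun w : EuclideanSpace ℝ (Fin (2 * n)) =>
        π * R ^ 2 / 8 + Real.sqrt (‖w‖ ^ 2) / 4 * Real.sqrt (R ^ 2 - ‖w‖ ^ 2)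
        - R ^ 2 / 4 * Real.arcsin (Real.sqrt (‖w‖ ^ 2) / R))
      ((-(‖z‖ / (2 * Real.sqrt (R ^ 2 - ‖z‖ ^ 2)))) • z) z := by
    rw [hasGradientAt_iff_hasFDerivAt, hlin]
    exact hcomp
  refine hg.congr_of_eventuallyEq ?_
  have hball : ball (0 : EuclideanSpace ℝ (Fin (2 * n))) R ∈ nhds z :=
    isOpen_ball.mem_nhds (by simpa [mem_ball, dist_zero_right] using hzR)
  filter_upwards [hball] with w hw
  have hw' : ‖w‖ ≤ R := le_of_lt (by simpa [mem_ball, dist_zero_right] using hw)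
  simp only [uR, if_pos hw', Real.sqrt_sq (norm_nonneg w)]

lemma integrand_eq (n : ℕ) (R : ℝ) (hR : 0 < R) {z : EuclideanSpace ℝ (Fin (2 * n))}
    (hz0 : z ≠ 0) (hzR : ‖z‖ < R) :
    ‖gradient (uR n R) z + (1 / 2 : ℝ) • zperp n z‖
      = ‖z‖ * R / (2 * Real.sqrt (R ^ 2 - ‖z‖ ^ 2)) := by
  have hz : 0 < ‖z‖ := norm_pos_iff.mpr hz0
  have hbpos : 0 < R ^ 2 - ‖z‖ ^ 2 := by nlinarith
  have hb : 0 < Real.sqrt (R ^ 2 - ‖z‖ ^ 2) := Real.sqrt_pos.mpr hbpos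
  have hb2 : Real.sqrt (R ^ 2 - ‖z‖ ^ 2) ^ 2 = R ^ 2 - ‖z‖ ^ 2 := Real.sq_sqrt hbpos.le
  rw [(hasGradientAt_uR n R hR hz0 hzR).gradient]
  have h0 : (inner ℝ ((-(‖z‖ / (2 * Real.sqrt (R ^ 2 - ‖z‖ ^ 2)))) • z)
      ((1 / 2 : ℝ) • zperp n z) : ℝ) = 0 := by
    rw [real_inner_smul_left, real_inner_smul_right, inner_zperp]
    ring
  have hsq : ‖(-(‖z‖ / (2 * Real.sqrt (R ^ 2 - ‖z‖ ^ 2)))) • z + (1 / 2 : ℝ) • zperp n z‖ ^ 2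
      = (‖z‖ * R / (2 * Real.sqrt (R ^ 2 - ‖z‖ ^ 2))) ^ 2 := by
    rw [norm_add_sq_real, h0, norm_smul, norm_smul, norm_zperp]
    rw [mul_pow, mul_pow, Real.norm_eq_abs, Real.norm_eq_abs, sq_abs, sq_abs]
    have : (-(‖z‖ / (2 * Real.sqrt (R ^ 2 - ‖z‖ ^ 2)))) ^ 2
        = ‖z‖ ^ 2 / (4 * (R ^ 2 - ‖z‖ ^ 2)) := by
      rw [neg_pow, div_pow, mul_pow, hb2]
      ring
    rw [this]
    field_simp
    rw [hb2]; ring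
  calc ‖(-(‖z‖ / (2 * Real.sqrt (R ^ 2 - ‖z‖ ^ 2)))) • z + (1 / 2 : ℝ) • zperp n z‖
      = Real.sqrt (‖(-(‖z‖ / (2 * Real.sqrt (R ^ 2 - ‖z‖ ^ 2)))) • z
          + (1 / 2 : ℝ) • zperp n z‖ ^ 2) := (Real.sqrt_sq (norm_nonneg _)).symm
    _ = Real.sqrt ((‖z‖ * R / (2 * Real.sqrt (R ^ 2 - ‖z‖ ^ 2))) ^ 2) := by rw [hsq]
    _ = ‖z‖ * R / (2 * Real.sqrt (R ^ 2 - ‖z‖ ^ 2)) := Real.sqrt_sq (by positivity)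

lemma prod_ratio (n : ℕ) :
    (∏ i ∈ Finset.range n, ((2*(i:ℝ)+1)/(2*(i:ℝ)+2)))
      = Real.Gamma ((n:ℝ)+1/2) / (Real.sqrt π * Real.Gamma ((n:ℝ)+1)) := by
  induction n with
  | zero =>
      have hs : Real.sqrt π ≠ 0 := (Real.sqrt_pos.mpr Real.pi_pos).ne'
      simp only [Finset.range_zero, Finset.prod_empty, Nat.cast_zero, zero_add, Real.Gamma_one,
        mul_one]
      rw [Real.Gamma_one_half_eq, div_self hs]
  | succ m ih =>
    rw [Finset.prod_range_succ, ih]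
    have h1 : ((m:ℝ)+1) + 1/2 = ((m:ℝ)+1/2) + 1 := by ring
    have h2 : Real.Gamma (((m:ℝ)+1) + 1/2) = ((m:ℝ)+1/2) * Real.Gamma ((m:ℝ)+1/2) := by
      rw [h1, Real.Gamma_add_one (by positivity)]
    have h3 : Real.Gamma (((m:ℝ)+1) + 1) = ((m:ℝ)+1) * Real.Gamma ((m:ℝ)+1) := by
      rw [Real.Gamma_add_one (by positivity)]
    push_cast
    rw [h2, h3]
    have hg1 : Real.Gamma ((m:ℝ)+1/2) ≠ 0 := (Real.Gamma_pos_of_pos (by positivity)).ne'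
    have hg2 : Real.Gamma ((m:ℝ)+1) ≠ 0 := (Real.Gamma_pos_of_pos (by positivity)).ne'
    have hs : Real.sqrt π ≠ 0 := (Real.sqrt_pos.mpr Real.pi_pos).ne'
    field_simp

lemma sin_pow_Ioo (m : ℕ) :
    (∫ θ in Set.Ioo (0:ℝ) (π/2), Real.sin θ ^ (2*m))
      = π/2 * ∏ i ∈ Finset.range m, ((2*(i:ℝ)+1)/(2*(i:ℝ)+2)) := by
  have hcont : Continuous fun θ : ℝ => Real.sin θ ^ (2*m) := Real.continuous_sin.pow _
  have hsym : (∫ θ in (π/2)..π, Real.sin θ ^ (2*m)) = ∫ θ in (0:ℝ)..(π/2), Real.sin θ ^ (2*m) := by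
    have := intervalIntegral.integral_comp_sub_left (fun θ : ℝ => Real.sin θ ^ (2*m)) π
      (a := 0) (b := π/2)
    simp only [Real.sin_pi_sub] at this
    rw [show π - π/2 = π/2 by ring, sub_zero] at this
    exact this.symm
  have hadd : (∫ θ in (0:ℝ)..(π/2), Real.sin θ ^ (2*m))
        + (∫ θ in (π/2)..π, Real.sin θ ^ (2*m)) = ∫ θ in (0:ℝ)..π, Real.sin θ ^ (2*m) :=
    intervalIntegral.integral_add_adjacent_intervals
      (hcont.intervalIntegrable _ _) (hcont.intervalIntegrable _ _)
  have h2 : (∫ θ in (0:ℝ)..(π/2), Real.sin θ ^ (2*m))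
      = π/2 * ∏ i ∈ Finset.range m, ((2*(i:ℝ)+1)/(2*(i:ℝ)+2)) := by
    have hval := integral_sin_pow_even m
    rw [hsym] at hadd
    linarith
  rw [← h2, intervalIntegral.integral_of_le (by positivity), integral_Ioc_eq_integral_Ioo]

lemma image_sin (R : ℝ) (hR : 0 < R) :
    (fun θ : ℝ => R * Real.sin θ) '' (Set.Ioo 0 (π/2)) = Set.Ioo 0 R := by
  ext y
  constructor
  · rintro ⟨θ, hθ, rfl⟩
    have h1 : 0 < Real.sin θ := Real.sin_pos_of_pos_of_lt_pi hθ.1 (by linarith [Real.pi_pos, hθ.2])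
    have h2 : Real.sin θ < 1 := by
      have := Real.strictMonoOn_sin (a := θ) (b := π/2)
        ⟨by linarith [hθ.1, Real.pi_pos], hθ.2.le⟩ ⟨by linarith [Real.pi_pos], le_rfl⟩ hθ.2
      simpa using this
    refine ⟨by positivity, ?_⟩
    show R * Real.sin θ < R
    nlinarith
  · rintro ⟨hy0, hyR⟩
    refine ⟨Real.arcsin (y / R), ⟨Real.arcsin_pos.mpr (by positivity),
      Real.arcsin_lt_pi_div_two.mpr ((div_lt_one hR).mpr hyR)⟩, ?_⟩
    show R * Real.sin (Real.arcsin (y / R)) = y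
    rw [Real.sin_arcsin (by linarith [div_pos hy0 hR]) (by rw [div_le_one hR]; exact hyR.le)]
    field_simp

lemma Jlemma (n : ℕ) (R : ℝ) (hR : 0 < R) :
    (∫ y in Set.Ioo (0:ℝ) R, y^(2*n) / Real.sqrt (R^2 - y^2))
      = R^(2*n) * ∫ θ in Set.Ioo (0:ℝ) (π/2), Real.sin θ ^ (2*n) := by
  have hderiv : ∀ θ ∈ Set.Ioo (0:ℝ) (π/2), HasDerivWithinAt (fun θ : ℝ => R * Real.sin θ)
      (R * Real.cos θ) (Set.Ioo 0 (π/2)) θ :=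
    fun θ _ => ((Real.hasDerivAt_sin θ).const_mul R).hasDerivWithinAt
  have hinj : Set.InjOn (fun θ : ℝ => R * Real.sin θ) (Set.Ioo 0 (π/2)) := by
    intro a ha b hb hab
    have := Real.injOn_sin ⟨by linarith [ha.1, Real.pi_pos], by linarith [ha.2]⟩
      ⟨by linarith [hb.1, Real.pi_pos], by linarith [hb.2]⟩
      (mul_left_cancel₀ hR.ne' hab)
    exact this
  rw [← image_sin R hR,
    MeasureTheory.integral_image_eq_integral_abs_deriv_smul measurableSet_Ioo hderiv hinj]
  rw [← integral_const_mul]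
  refine MeasureTheory.setIntegral_congr_fun measurableSet_Ioo fun θ hθ => ?_
  have hcos : 0 < Real.cos θ := Real.cos_pos_of_mem_Ioo
    ⟨by linarith [hθ.1, Real.pi_pos], hθ.2⟩
  have hsqrt : Real.sqrt (R^2 - (R * Real.sin θ)^2) = R * Real.cos θ := by
    rw [show R^2 - (R * Real.sin θ)^2 = (R * Real.cos θ)^2 by
      have := Real.sin_sq_add_cos_sq θ; nlinarith]
    exact Real.sqrt_sq (by positivity)
  rw [abs_of_pos (by positivity : (0:ℝ) < R * Real.cos θ)]
  rw [smul_eq_mul, hsqrt, mul_pow]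
  field_simp

theorem stmt_5 (n : ℕ) (hn : 1 ≤ n) (R : ℝ) (hR : 0 < R) (Q : ℝ) (hQ : Q = 2 * n + 2) :
    (∫ z in ball (0 : EuclideanSpace ℝ (Fin (2 * n))) R,
        ‖gradient (uR n R) z + (1 / 2 : ℝ) • zperp n z‖) =
      π ^ ((n : ℝ) + 1 / 2) * Real.Gamma ((n : ℝ) + 1 / 2) /
        (2 * Real.Gamma n * Real.Gamma ((n : ℝ) + 1)) * R ^ (2 * (n : ℝ) + 1) ∧
    (∫ z in ball (0 : EuclideanSpace ℝ (Fin (2 * n))) R,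
        ‖gradient (uR n R) z + (1 / 2 : ℝ) • zperp n z‖) =
      π ^ ((Q - 1) / 2) * Real.Gamma ((Q - 1) / 2) /
        (2 * Real.Gamma ((Q - 2) / 2) * Real.Gamma (Q / 2)) * R ^ (Q - 1) := by
  haveI hne : Nonempty (Fin (2 * n)) := ⟨⟨0, by omega⟩⟩
  haveI : Nontrivial (EuclideanSpace ℝ (Fin (2 * n))) := inferInstance
  set g : ℝ → ℝ := fun r => if r < R then r * R / (2 * Real.sqrt (R ^ 2 - r ^ 2)) else 0 with hg
  have h1 : (∫ z in ball (0 : EuclideanSpace ℝ (Fin (2 * n))) R,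
      ‖gradient (uR n R) z + (1 / 2 : ℝ) • zperp n z‖)
      = ∫ z in ball (0 : EuclideanSpace ℝ (Fin (2 * n))) R, g ‖z‖ := by
    refine setIntegral_congr_ae measurableSet_ball ?_
    have hsing : (volume : Measure (EuclideanSpace ℝ (Fin (2 * n)))) {0} = 0 :=
      measure_singleton 0
    have h0 := measure_eq_zero_iff_ae_notMem.mp hsing
    filter_upwards [h0] with z hz0 hzb
    have hz0' : z ≠ 0 := by simpa using hz0
    have hzR : ‖z‖ < R := mem_ball_zero_iff.mp hzb
    rw [integrand_eq n R hR hz0' hzR, hg]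
    simp only [if_pos hzR]
  have h2 : (∫ z in ball (0 : EuclideanSpace ℝ (Fin (2 * n))) R, g ‖z‖)
      = ∫ z : EuclideanSpace ℝ (Fin (2 * n)), g ‖z‖ := by
    rw [← integral_indicator measurableSet_ball]
    congr 1
    ext z
    by_cases hz : z ∈ ball (0 : EuclideanSpace ℝ (Fin (2 * n))) R
    · rw [Set.indicator_of_mem hz]
    · rw [Set.indicator_of_notMem hz, hg]
      simp only
      rw [if_neg (by simpa [mem_ball_zero_iff] using hz)]
  have h3 := integral_fun_norm_addHaar (volume : Measure (EuclideanSpace ℝ (Fin (2 * n)))) g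
  have hrank : Module.finrank ℝ (EuclideanSpace ℝ (Fin (2 * n))) = 2 * n := by
    simp [finrank_euclideanSpace]
  rw [hrank] at h3
  have hvol : (volume (ball (0 : EuclideanSpace ℝ (Fin (2 * n))) 1)).toReal
      = π ^ n / Real.Gamma ((n : ℝ) + 1) := by
    rw [EuclideanSpace.volume_ball]
    simp only [Fintype.card_fin, ENNReal.ofReal_one, one_pow, one_mul]
    rw [ENNReal.toReal_ofReal (div_nonneg (by positivity)
      (Real.Gamma_pos_of_pos (by positivity)).le)]
    rw [show ((2 * n : ℕ) : ℝ) / 2 + 1 = (n : ℝ) + 1 by push_cast; ring]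
    rw [pow_mul, Real.sq_sqrt Real.pi_pos.le]
  have h4 : (∫ y in Set.Ioi (0 : ℝ), y ^ (2 * n - 1) • g y)
      = R / 2 * ∫ y in Set.Ioo (0 : ℝ) R, y ^ (2 * n) / Real.sqrt (R ^ 2 - y ^ 2) := by
    have hsub : Set.EqOn (fun y : ℝ => y ^ (2 * n - 1) • g y)
        (Set.indicator (Set.Ioo (0 : ℝ) R)
          (fun y => R / 2 * (y ^ (2 * n) / Real.sqrt (R ^ 2 - y ^ 2)))) (Set.Ioi 0) := by
      intro y hy
      have hy0 : (0 : ℝ) < y := hy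
      by_cases hyR : y < R
      · rw [Set.indicator_of_mem (Set.mem_Ioo.mpr ⟨hy0, hyR⟩)]
        simp only [smul_eq_mul, hg, if_pos hyR]
        have hpow : y ^ (2 * n - 1) * y = y ^ (2 * n) := by
          rw [← pow_succ]
          congr 1
          omega
        calc y ^ (2 * n - 1) * (y * R / (2 * Real.sqrt (R ^ 2 - y ^ 2)))
            = y ^ (2 * n - 1) * y * R / (2 * Real.sqrt (R ^ 2 - y ^ 2)) := by ring
          _ = y ^ (2 * n) * R / (2 * Real.sqrt (R ^ 2 - y ^ 2)) := by rw [hpow]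
          _ = R / 2 * (y ^ (2 * n) / Real.sqrt (R ^ 2 - y ^ 2)) := by ring
      · rw [Set.indicator_of_notMem (fun h => hyR h.2)]
        simp only [smul_eq_mul, hg, if_neg hyR, mul_zero]
    rw [setIntegral_congr_fun measurableSet_Ioi hsub, integral_indicator measurableSet_Ioo,
      Measure.restrict_restrict measurableSet_Ioo,
      Set.inter_eq_self_of_subset_left Set.Ioo_subset_Ioi_self, integral_const_mul]
  have hmain : (∫ z in ball (0 : EuclideanSpace ℝ (Fin (2 * n))) R,
      ‖gradient (uR n R) z + (1 / 2 : ℝ) • zperp n z‖)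
      = π ^ ((n : ℝ) + 1 / 2) * Real.Gamma ((n : ℝ) + 1 / 2) /
        (2 * Real.Gamma n * Real.Gamma ((n : ℝ) + 1)) * R ^ (2 * (n : ℝ) + 1) := by
    rw [h1, h2, h3, measureReal_def, hvol, h4, Jlemma n R hR, sin_pow_Ioo n, prod_ratio n]
    have hπ : π ^ ((n : ℝ) + 1 / 2) = π ^ n * Real.sqrt π := by
      rw [Real.rpow_add Real.pi_pos, Real.rpow_natCast, ← Real.sqrt_eq_rpow]
    have hRpow : R ^ (2 * (n : ℝ) + 1) = R ^ (2 * n) * R := by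
      rw [show 2 * (n : ℝ) + 1 = ((2 * n + 1 : ℕ) : ℝ) by push_cast; ring,
        Real.rpow_natCast, pow_succ]
    have hΓ : Real.Gamma ((n : ℝ) + 1) = n * Real.Gamma n := by
      rw [Real.Gamma_add_one (Nat.cast_ne_zero.mpr (by omega))]
    have hΓn : Real.Gamma ((n : ℝ)) ≠ 0 :=
      (Real.Gamma_pos_of_pos (by exact_mod_cast Nat.pos_of_ne_zero (by omega))).ne'
    have hΓn1 : Real.Gamma ((n : ℝ) + 1) ≠ 0 :=
      (Real.Gamma_pos_of_pos (by positivity)).ne'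
    have hsπ : Real.sqrt π ≠ 0 := (Real.sqrt_pos.mpr Real.pi_pos).ne'
    have hππ : Real.sqrt π * Real.sqrt π = π := Real.mul_self_sqrt Real.pi_pos.le
    rw [hπ, hRpow, nsmul_eq_mul, smul_eq_mul]
    rw [hΓ] at hΓn1 ⊢
    push_cast
    rw [show π = Real.sqrt π * Real.sqrt π from hππ.symm]
    rw [show (Real.sqrt π * Real.sqrt π) ^ n = π ^ n by rw [hππ]]
    have hn0 : ((n : ℝ)) ≠ 0 := Nat.cast_ne_zero.mpr (by omega)
    field_simp
    linear_combination (-(Real.sqrt π + Real.sqrt (Real.sqrt π ^ 2))) *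
      Real.sqrt_sq (Real.sqrt_nonneg π)
  refine ⟨hmain, ?_⟩
  rw [hmain, hQ]
  norm_num
  rw [show (2*(n:ℝ)+2-1)/2 = (n:ℝ)+1/2 by ring, show (2*(n:ℝ)+2)/2 = (n:ℝ)+1 by ring,
    show (2*(n:ℝ)+2-1 : ℝ) = 2*(n:ℝ)+1 by ring]
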